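/- Let α be an action of a locally compact abelian group G on a Hausdorff uniform space (X, 𝒰) and assume 𝒰 is G-invariant. Then an element x ∈ X is pseudo Bochner-type almost periodic (i.e. for every U ∈ 𝒰 the set P_U(x) = {t ∈ G : (α(t,x), x) ∈ U} is finitely relatively dense in G) if and only if the orbit O(x) = {α(t,x) : t ∈ G} is totally bounded in (X, 𝒰). -/

import Mathlib

open Uniformity Pointwise

/-- For an action `α` of a locally compact abelian group `G` on a Hausdorff
uniform space `(X, 𝒰)` with `𝒰` `G`-invariant, a point `x` is pseudo Bochner-type almost
periodic (every set of `U`-almost periods is finitely relatively dense) iff the orbit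
`O(x) = {α t x : t ∈ G}` is totally bounded. -/
theorem stmt3 {G X : Type*}
    [AddCommGroup G] [TopologicalSpace G] [IsTopologicalAddGroup G]
    [LocallyCompactSpace G] [T2Space G]
    [UniformSpace X] [T2Space X]
    (α : G → X → X)
    (hzero : ∀ x, α 0 x = x)
    (hadd : ∀ s t x, α s (α t x) = α (s + t) x)
    (hinv : ∀ U ∈ 𝓤 X, ∃ U' ∈ 𝓤 X, ∀ (t : G), ∀ p : X × X, p ∈ U' →
      (α t p.1, α t p.2) ∈ U)
    (x : X) :
    (∀ U ∈ 𝓤 X, ∃ F : Set G, F.Finite ∧ {t : G | (α t x, x) ∈ U} + F = Set.univ)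
      ↔
    (∀ U ∈ 𝓤 X, ∃ T : Set (Set X), T.Finite ∧
      (Set.range fun t : G => α t x) ⊆ ⋃₀ T ∧ ∀ s ∈ T, s ×ˢ s ⊆ U) := by
  constructor
  · intro h U hU
    obtain ⟨V, hV, hVsymm, hVcomp⟩ := comp_symm_mem_uniformity_sets hU
    obtain ⟨V', hV', hV'inv⟩ := hinv V hV
    obtain ⟨F, hFfin, hFdense⟩ := h V' hV'
    refine ⟨(fun f => {y | (y, α f x) ∈ V}) '' F, hFfin.image _, ?_, ?_⟩
    · rintro _ ⟨g, rfl⟩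
      have hg : g ∈ {t : G | (α t x, x) ∈ V'} + F := by rw [hFdense]; trivial
      rw [Set.mem_add] at hg
      obtain ⟨p, hp, f, hf, rfl⟩ := hg
      refine Set.mem_sUnion.2 ⟨_, ⟨f, hf, rfl⟩, ?_⟩
      have h1 : (α f (α p x), α f x) ∈ V := hV'inv f (α p x, x) hp
      have h2 : α f (α p x) = α (p + f) x := by rw [hadd, add_comm]
      rw [h2] at h1
      exact h1
    · rintro _ ⟨f, hf, rfl⟩ ⟨y, z⟩ ⟨hy, hz⟩
      exact hVcomp (SetRel.mem_comp.2 ⟨α f x, hy, hVsymm.symm _ _ hz⟩)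
  · intro h U hU
    obtain ⟨V, hV, hVinv⟩ := hinv U hU
    obtain ⟨T, hTfin, hTcov, hTsmall⟩ := h V hV
    classical
    set c : Set X → G := fun s => if hs : ∃ t : G, α t x ∈ s then hs.choose else 0 with hc
    refine ⟨c '' T, hTfin.image _, ?_⟩
    rw [Set.eq_univ_iff_forall]
    intro g
    obtain ⟨s, hsT, hgs⟩ := Set.mem_sUnion.1 (hTcov ⟨g, rfl⟩)
    have hex : ∃ t : G, α t x ∈ s := ⟨g, hgs⟩
    have hcs : α (c s) x ∈ s := by
      rw [hc]; simp only [dif_pos hex]; exact hex.choose_spec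
    have hpair : (α g x, α (c s) x) ∈ V := hTsmall s hsT ⟨hgs, hcs⟩
    have key : (α (-(c s)) (α g x), α (-(c s)) (α (c s) x)) ∈ U :=
      hVinv (-(c s)) (α g x, α (c s) x) hpair
    have e1 : α (-(c s)) (α g x) = α (g - c s) x := by
      rw [hadd, neg_add_eq_sub]
    have e2 : α (-(c s)) (α (c s) x) = x := by
      rw [hadd, neg_add_cancel, hzero]
    rw [e1, e2] at key
    exact Set.mem_add.2 ⟨g - c s, key, c s, ⟨s, hsT, rfl⟩, sub_add_cancel g (c s)⟩
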